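/- Let k ≥ 2, n = 4k, H the regular Cayley representation of Q_{4k} in Sym_n, and π : FM_n → S_n(H) the canonical projection. Let 1 ≤ i < n, τ ∈ H and w_1, w_2 ∈ FM_n with π(w_1) = π(x_{τ(i+1)}···x_{τ(n)} w_2). Then either w_1 = x_{τ(i+1)}···x_{τ(n)} w_2' for some w_2' ∈ FM_n, or there exist γ ∈ H and w_2'' ∈ FM_n with w_1 = x_{τ(i+1)}···x_{τ(n−1)} x_{γ(1)}···x_{γ(n−1)} w_2''. -/

import Mathlib

set_option maxHeartbeats 1000000


/-- The position in `{1, ..., 4*k}` of an element of the generalized quaternion group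
`Q_{4k}`, under the identification `t^i ↔ i+1` and `t^i * u ↔ i + 2k + 1`
(for `0 ≤ i ≤ 2k-1`), where `t = QuaternionGroup.a 1` and `u = QuaternionGroup.xa 0`.
Note `QuaternionGroup.xa j = u * t^j = t^(-j) * u`. -/
def qpos (k : ℕ) : QuaternionGroup k → ℕ
  | .a i => i.val + 1
  | .xa i => (-i).val + 2 * k + 1

/-- The element of `Q_{4k}` at position `p ∈ {1, ..., 4*k}`. -/
def qofpos (k : ℕ) (p : ℕ) : QuaternionGroup k :=
  if p ≤ 2 * k then .a ((p - 1 : ℕ) : ZMod (2 * k))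
  else .xa (-((p - 2 * k - 1 : ℕ) : ZMod (2 * k)))

/-- The Cayley (left regular) representation of `Q_{4k}` as permutations of the
positions `{1, ..., 4*k}`: the element at position `p` is sent, by `g`, to the
position of `g * (element at position p)`. -/
def qact (k : ℕ) (g : QuaternionGroup k) (p : ℕ) : ℕ :=
  qpos k (g * qofpos k p)

lemma qpos_bounds (k : ℕ) (hk : 2 ≤ k) (x : QuaternionGroup k) :
    1 ≤ qpos k x ∧ qpos k x ≤ 4 * k := by
  haveI : NeZero (2 * k) := ⟨by omega⟩
  cases x with
  | a i => have := i.val_lt; simp only [qpos]; omega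
  | xa i => have := (-i).val_lt; simp only [qpos]; omega

/-- The generator `x_{σ(p)}` (as an element of `Fin (4*k)`, `0`-indexed) of the free
monoid, where `σ` is the permutation of `{1, ..., 4*k}` given by `g ∈ H`. -/
def qletter (k : ℕ) (hk : 2 ≤ k) (g : QuaternionGroup k) (p : ℕ) : Fin (4 * k) :=
  ⟨qact k g p - 1, by
    have h := qpos_bounds k hk (g * qofpos k p)
    simp only [qact]; omega⟩

/-- The word `x_{σ(a)} x_{σ(a+1)} ⋯ x_{σ(a+len-1)}` in the free monoid on
`x_1, ..., x_n` (letters indexed by `Fin (4*k)`, `0`-indexed). -/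
def segWord (k : ℕ) (hk : 2 ≤ k) (g : QuaternionGroup k) (a len : ℕ) :
    FreeMonoid (Fin (4 * k)) :=
  FreeMonoid.ofList ((List.range' a len).map (qletter k hk g))

/-- The word `x_1 x_2 ⋯ x_n`. -/
def baseWord (k : ℕ) : FreeMonoid (Fin (4 * k)) :=
  FreeMonoid.ofList (List.ofFn (fun m : Fin (4 * k) => m))

/-- The defining relations `x_1 ⋯ x_n = x_{σ(1)} ⋯ x_{σ(n)}`, `σ ∈ H`. -/
def qrel (k : ℕ) (hk : 2 ≤ k) (w v : FreeMonoid (Fin (4 * k))) : Prop :=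
  w = baseWord k ∧ ∃ g : QuaternionGroup k, v = segWord k hk g 1 (4 * k)

/-- The congruence on the free monoid generated by the defining relations. -/
def qcon (k : ℕ) (hk : 2 ≤ k) : Con (FreeMonoid (Fin (4 * k))) :=
  conGen (qrel k hk)

/-- The monoid `S_n(H) = ⟨a_1, ..., a_n ∣ a_1 ⋯ a_n = a_{σ(1)} ⋯ a_{σ(n)}, σ ∈ H⟩`
where `n = 4k` and `H` is the regular Cayley representation of `Q_{4k}` in `Sym_n`. -/
abbrev Smon (k : ℕ) (hk : 2 ≤ k) : Type := (qcon k hk).Quotient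

section Basics
variable {k : ℕ} (hk : 2 ≤ k)

lemma qpos_inj (hk : 2 ≤ k) : Function.Injective (qpos k) := by
  haveI : NeZero (2 * k) := ⟨by omega⟩
  rintro (i | i) (j | j) h <;> simp only [qpos] at h
  · have : i.val = j.val := by omega
    exact congrArg _ (ZMod.val_injective _ this)
  · have := i.val_lt; have := (-j).val_lt; omega
  · have := j.val_lt; have := (-i).val_lt; omega
  · have : (-i).val = (-j).val := by omega
    have := ZMod.val_injective _ this
    exact congrArg _ (neg_injective this)

lemma qletter_eq (c d : QuaternionGroup k) (p q : ℕ)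
    (h : qletter k hk c p = qletter k hk d q) :
    c * qofpos k p = d * qofpos k q := by
  apply qpos_inj hk
  have h1 := qpos_bounds k hk (c * qofpos k p)
  have h2 := qpos_bounds k hk (d * qofpos k q)
  have := congrArg Fin.val h
  simp only [qletter, qact] at this ⊢
  omega

lemma qofpos_block1 (p : ℕ) (h : p ≤ 2 * k) :
    qofpos k p = .a ((p - 1 : ℕ) : ZMod (2 * k)) := if_pos h

lemma qofpos_block2 (p : ℕ) (h : 2 * k < p) :
    qofpos k p = .xa (-((p - 2 * k - 1 : ℕ) : ZMod (2 * k))) := if_neg (by omega)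

/-- Key rigidity: a strict suffix of one relator word cannot be a prefix of
another relator word, if the overlap has length ≥ 2. -/
lemma rig1 (c d : QuaternionGroup k) (p ℓ : ℕ) (hp : 2 ≤ p) (hl : 2 ≤ ℓ)
    (he : p + ℓ = 4 * k + 1)
    (h : ∀ t, t < ℓ → qletter k hk c (p + t) = qletter k hk d (1 + t)) : False := by
  haveI : NeZero (2 * k) := ⟨by omega⟩
  have key : ∀ t, t < ℓ → (d⁻¹ * c) * qofpos k (p + t) = qofpos k (1 + t) := by
    intro t ht
    have := qletter_eq hk c d (p + t) (1 + t) (h t ht)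
    rw [mul_assoc, this, ← mul_assoc, inv_mul_cancel, one_mul]
  rcases e : d⁻¹ * c with m | m
  · -- e = a m : pick t with p + t in block 2, 1 + t in block 1
    set t := if p ≤ 2 * k then 2 * k + 1 - p else 4 * k - p with htdef
    have ht : t < ℓ := by simp only [htdef]; split <;> omega
    have h1 : 2 * k < p + t := by simp only [htdef]; split <;> omega
    have h2 : 1 + t ≤ 2 * k := by simp only [htdef]; split <;> omega
    have := key t ht
    rw [e, qofpos_block2 _ h1, qofpos_block1 _ h2] at this
    simp at this
  · rcases le_or_gt p (2 * k) with hb | hb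
    · -- t = 0 : block1 → block1 but e swaps blocks
      have h0 := key 0 (by omega)
      rw [e, qofpos_block1 (p + 0) (by omega), qofpos_block1 (1 + 0) (by omega)] at h0
      simp [QuaternionGroup.one_def, -QuaternionGroup.a_zero] at h0
    · -- p > 2k : both t = 0, 1 in block 2 on p-side, block 1 on q-side
      have h0 := key 0 (by omega)
      have h1 := key 1 (by omega)
      rw [e, qofpos_block2 (p + 0) (by omega), qofpos_block1 (1 + 0) (by omega)] at h0
      rw [e, qofpos_block2 (p + 1) (by omega), qofpos_block1 (1 + 1) (by omega)] at h1
      simp only [QuaternionGroup.xa_mul_xa, QuaternionGroup.xa_mul_a,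
        QuaternionGroup.a.injEq] at h0 h1
      have e2 : (p + 1 - 2 * k - 1 : ℕ) = (p + 0 - 2 * k - 1) + 1 := by omega
      have e3 : (1 + 0 - 1 : ℕ) = 0 := by omega
      have e4 : (1 + 1 - 1 : ℕ) = 1 := by omega
      rw [e3] at h0
      rw [e2, e4] at h1
      push_cast at h0 h1
      have hcontr : (2 : ZMod (2 * k)) = 0 := by linear_combination h0 - h1
      have : ((2 : ℕ) : ZMod (2 * k)) = 0 := by exact_mod_cast hcontr
      rw [ZMod.natCast_eq_zero_iff] at this
      have := Nat.le_of_dvd (by omega) this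
      omega

lemma qletter_inj1 (c d : QuaternionGroup k)
    (h : qletter k hk c 1 = qletter k hk d 1) : c = d := by
  have := qletter_eq hk c d 1 1 h
  exact mul_right_cancel this

end Basics

section Lists
variable (k : ℕ) (hk : 2 ≤ k)

/-- The full relator word of `γ` as a list. -/
def Flist (γ : QuaternionGroup k) : List (Fin (4 * k)) :=
  (List.range' 1 (4 * k)).map (qletter k hk γ)

/-- The relator word of `γ` minus its last letter. -/
def Clist (γ : QuaternionGroup k) : List (Fin (4 * k)) :=
  (List.range' 1 (4 * k - 1)).map (qletter k hk γ)

/-- The suffix `x_{σ_c(i+1)} ⋯ x_{σ_c(n-1)}` of the relator word of `c`. -/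
def Blist (c : QuaternionGroup k) (i : ℕ) : List (Fin (4 * k)) :=
  (List.range' (i + 1) (4 * k - 1 - i)).map (qletter k hk c)

/-- Concatenation of truncated relator words. -/
def chain : List (QuaternionGroup k) → List (Fin (4 * k))
  | [] => []
  | γ :: gs => Clist k hk γ ++ chain gs

/-- The expected next letter after `Blist c i ++ chain gs`. -/
def Eexp (c : QuaternionGroup k) (gs : List (QuaternionGroup k)) : Fin (4 * k) :=
  qletter k hk (gs.getLastD c) (4 * k)

variable {k hk}

@[simp] lemma length_Flist (γ : QuaternionGroup k) : (Flist k hk γ).length = 4 * k := by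
  simp [Flist]

@[simp] lemma length_Clist (γ : QuaternionGroup k) : (Clist k hk γ).length = 4 * k - 1 := by
  simp [Clist]

@[simp] lemma length_Blist (c : QuaternionGroup k) (i : ℕ) :
    (Blist k hk c i).length = 4 * k - 1 - i := by simp [Blist]

lemma getElem_mapseg (c : QuaternionGroup k) (a len t : ℕ) (ht : t < len)
    {h : t < ((List.range' a len).map (qletter k hk c)).length} :
    ((List.range' a len).map (qletter k hk c))[t] = qletter k hk c (a + t) := by
  simp [List.getElem_map, List.getElem_range']

lemma getElem_Flist (γ : QuaternionGroup k) {t : ℕ}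
    {h : t < (Flist k hk γ).length} :
    (Flist k hk γ)[t] = qletter k hk γ (1 + t) :=
  getElem_mapseg γ 1 (4 * k) t (by simpa using h)

lemma getElem_Clist (γ : QuaternionGroup k) {t : ℕ}
    {h : t < (Clist k hk γ).length} :
    (Clist k hk γ)[t] = qletter k hk γ (1 + t) :=
  getElem_mapseg γ 1 (4 * k - 1) t (by simpa using h)

lemma getElem_Blist (c : QuaternionGroup k) (i : ℕ) {t : ℕ}
    {h : t < (Blist k hk c i).length} :
    (Blist k hk c i)[t] = qletter k hk c (i + 1 + t) :=
  getElem_mapseg c (i + 1) (4 * k - 1 - i) t (by simpa using h)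

lemma range_split (k : ℕ) (hk : 2 ≤ k) :
    List.range' 1 (4 * k) = List.range' 1 (4 * k - 1) ++ [4 * k] := by
  have h4 : 4 * k = (4 * k - 1) + 1 := by omega
  conv_lhs => rw [h4]
  rw [List.range'_concat]
  congr 2
  omega

lemma Flist_eq (γ : QuaternionGroup k) :
    Flist k hk γ = Clist k hk γ ++ [qletter k hk γ (4 * k)] := by
  rw [Flist, range_split k hk, List.map_append, Clist]
  rfl

lemma Blist_zero (γ : QuaternionGroup k) : Blist k hk γ 0 = Clist k hk γ := by
  simp [Blist, Clist]

/-- Splitting a list equation when the left part is at least as long. -/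
lemma split_long {α : Type*} {A u l Z : List α} (h : A ++ u = l ++ Z)
    (hle : A.length ≤ l.length) : l = A ++ l.drop A.length ∧ u = l.drop A.length ++ Z := by
  constructor
  · have := congrArg (List.take A.length) h
    rw [List.take_append, List.take_length, Nat.sub_self, List.take_zero,
      List.append_nil, List.take_append,
      Nat.sub_eq_zero_of_le hle, List.take_zero, List.append_nil] at this
    conv_lhs => rw [← List.take_append_drop A.length l]
    rw [← this]
  · have := congrArg (List.drop A.length) h
    rw [List.drop_append, List.drop_length, Nat.sub_self, List.drop_zero,
      List.nil_append, List.drop_append,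
      Nat.sub_eq_zero_of_le hle, List.drop_zero] at this
    exact this

end Lists

section MainLemma
variable {k : ℕ} (hk : 2 ≤ k)

lemma Eexp_cons (c γ : QuaternionGroup k) (gs : List (QuaternionGroup k)) :
    Eexp k hk c (γ :: gs) = Eexp k hk γ gs := by
  unfold Eexp
  rw [List.getLastD_cons]

lemma gcover (δ₁ δ₂ : QuaternionGroup k) (gs : List (QuaternionGroup k)) :
    ∀ (c : QuaternionGroup k) (i : ℕ), i < 4 * k →
    ∀ (l u v : List (Fin (4 * k))),
    Blist k hk c i ++ (chain k hk gs ++ Eexp k hk c gs :: u) = l ++ (Flist k hk δ₁ ++ v) →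
    ∃ c' gs' u', l ++ (Flist k hk δ₂ ++ v) =
      Blist k hk c' i ++ (chain k hk gs' ++ Eexp k hk c' gs' :: u') ∧ (1 ≤ i → c' = c) := by
  induction gs with
  | nil =>
    intro c i hi l u v h
    simp only [chain, List.nil_append] at h
    rcases Nat.lt_or_ge l.length (4 * k - i) with hcase | hcase
    · rcases Nat.lt_or_ge l.length (4 * k - 1 - i) with hlt | hge
      · -- occurrence starts strictly inside the prefix
        by_cases hz : i + l.length = 0
        · -- i = 0, l = [] : full alignment, just rebuild
          have hi0 : i = 0 := by omega
          have hl0 : l = [] := List.length_eq_zero_iff.mp (by omega)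
          subst hi0; subst hl0
          refine ⟨δ₂, [], v, ?_, fun hc => absurd hc (by omega)⟩
          simp only [chain, List.nil_append, Blist_zero, Eexp, List.getLastD_nil]
          rw [Flist_eq]
          simp
        · -- genuine overlap of length ≥ 2 : contradiction
          exfalso
          have hfun : ∀ t, t < (4 * k - 1 - i - l.length) + 1 →
              qletter k hk c (i + 1 + l.length + t) = qletter k hk δ₁ (1 + t) := by
            intro t ht
            have hlen2 : l.length + t < (l ++ (Flist k hk δ₁ ++ v)).length := by
              simp only [List.length_append, length_Flist]; omega
            have hlen1 : l.length + t <
                (Blist k hk c i ++ (Eexp k hk c [] :: u)).length := by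
              rw [h]; exact hlen2
            have hq := List.getElem_of_eq h hlen1
            rw [List.getElem_append_right (by omega : l.length ≤ l.length + t)] at hq
            rw [List.getElem_append_left (by simp only [length_Flist]; omega :
              l.length + t - l.length < (Flist k hk δ₁).length)] at hq
            have hidx : l.length + t - l.length = t := by omega
            simp only [hidx] at hq
            rw [getElem_Flist] at hq
            rcases Nat.lt_or_ge (l.length + t) (4 * k - 1 - i) with hbt | hbt
            · rw [List.getElem_append_left (by simp only [length_Blist]; omega :
                l.length + t < (Blist k hk c i).length)] at hq
              rw [getElem_Blist] at hq
              have heq2 : i + 1 + (l.length + t) = i + 1 + l.length + t := by omega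
              rw [heq2] at hq
              exact hq
            · rw [List.getElem_append_right (by simp only [length_Blist]; omega :
                (Blist k hk c i).length ≤ l.length + t)] at hq
              have hzero : l.length + t - (Blist k hk c i).length = 0 := by
                simp only [length_Blist]; omega
              simp only [hzero, List.getElem_cons_zero] at hq
              rw [Eexp, List.getLastD_nil] at hq
              have heq2 : 4 * k = i + 1 + l.length + t := by omega
              rw [← heq2]
              exact hq
          exact rig1 hk c δ₁ (i + 1 + l.length) ((4 * k - 1 - i - l.length) + 1)
            (by omega) (by omega) (by omega) hfun
      · -- l.length = 4k - 1 - i : occurrence starts right after Blist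
        obtain ⟨hBl, hEu⟩ := List.append_inj h (by simp only [length_Blist]; omega)
        refine ⟨c, [δ₂], v, ?_, fun _ => rfl⟩
        rw [← hBl, Flist_eq]
        have hE : Eexp k hk c [δ₂] = qletter k hk δ₂ (4 * k) := by
          unfold Eexp
          rw [List.getLastD_cons, List.getLastD_nil]
        rw [hE]
        simp [chain]
    · -- occurrence entirely inside u
      have h' : (Blist k hk c i ++ [Eexp k hk c []]) ++ u = l ++ (Flist k hk δ₁ ++ v) := by
        simpa using h
      obtain ⟨hl, hu⟩ := split_long h'
        (by simp only [List.length_append, length_Blist, List.length_singleton]; omega)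
      refine ⟨c, [],
        l.drop (Blist k hk c i ++ [Eexp k hk c []]).length ++ (Flist k hk δ₂ ++ v),
        ?_, fun _ => rfl⟩
      conv_lhs => rw [hl]
      simp [chain]
  | cons γ gs'' IH =>
    intro c i hi l u v h
    rw [Eexp_cons] at h
    simp only [chain] at h
    rcases Nat.lt_or_ge l.length (4 * k - 1 - i) with hlt | hge
    · by_cases hz : i + l.length = 0
      · -- i = 0, l = [] : full alignment at the start
        have hi0 : i = 0 := by omega
        have hl0 : l = [] := List.length_eq_zero_iff.mp (by omega)
        subst hi0; subst hl0
        refine ⟨δ₂, [], v, ?_, fun hc => absurd hc (by omega)⟩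
        simp only [chain, List.nil_append, Blist_zero, Eexp, List.getLastD_nil]
        rw [Flist_eq]
        simp
      · -- occurrence overlaps Clist γ with overlap length ≥ 2 : contradiction
        exfalso
        have hL1 : 1 ≤ 4 * k - 1 - i - l.length := by omega
        set L := 4 * k - 1 - i - l.length with hLdef
        have hfun : ∀ t, t < 4 * k - L →
            qletter k hk δ₁ (L + 1 + t) = qletter k hk γ (1 + t) := by
          intro t ht
          have hlen2 : (4 * k - 1 - i) + t < (l ++ (Flist k hk δ₁ ++ v)).length := by
            simp only [List.length_append, length_Flist]; omega
          have hlen1 : (4 * k - 1 - i) + t <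
              (Blist k hk c i ++ ((Clist k hk γ ++ chain k hk gs'') ++
                Eexp k hk γ gs'' :: u)).length := by
            rw [h]; exact hlen2
          have hq := List.getElem_of_eq h hlen1
          rw [List.getElem_append_right (by simp only [length_Blist]; omega :
            (Blist k hk c i).length ≤ (4 * k - 1 - i) + t)] at hq
          have e1 : (4 * k - 1 - i) + t - (Blist k hk c i).length = t := by
            simp only [length_Blist]; omega
          simp only [e1] at hq
          rw [List.getElem_append_left (by
            simp only [List.length_append, length_Clist, length_Flist]; omega :
            t < (Clist k hk γ ++ chain k hk gs'').length)] at hq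
          rw [List.getElem_append_left (by simp only [length_Clist]; omega :
            t < (Clist k hk γ).length)] at hq
          rw [getElem_Clist] at hq
          rw [List.getElem_append_right (by omega :
            l.length ≤ (4 * k - 1 - i) + t)] at hq
          have e2 : (4 * k - 1 - i) + t - l.length = L + t := by omega
          simp only [e2] at hq
          rw [List.getElem_append_left (by simp only [length_Flist]; omega :
            L + t < (Flist k hk δ₁).length)] at hq
          rw [getElem_Flist] at hq
          have e3 : 1 + (L + t) = L + 1 + t := by omega
          rw [e3] at hq
          exact hq.symm
        exact rig1 hk δ₁ γ (L + 1) (4 * k - L) (by omega) (by omega) (by omega) hfun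
    · -- occurrence beyond Blist : use induction hypothesis
      obtain ⟨hl, hX⟩ := split_long h (by simp only [length_Blist]; omega)
      set l₀ := l.drop (Blist k hk c i).length with hl0def
      have hX' : Blist k hk γ 0 ++ (chain k hk gs'' ++ Eexp k hk γ gs'' :: u) =
          l₀ ++ (Flist k hk δ₁ ++ v) := by
        rw [Blist_zero]
        simpa [List.append_assoc] using hX
      obtain ⟨c', gs', u', heq, -⟩ := IH γ 0 (by omega) l₀ u v hX'
      refine ⟨c, c' :: gs', u', ?_, fun _ => rfl⟩
      conv_lhs => rw [hl]
      rw [Eexp_cons]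
      simp only [chain, List.append_assoc]
      rw [heq, Blist_zero]

end MainLemma

section Final
variable {k : ℕ} (hk : 2 ≤ k)

lemma qpos_qofpos (hk' : 2 ≤ k) (p : ℕ) (h1 : 1 ≤ p) (h2 : p ≤ 4 * k) :
    qpos k (qofpos k p) = p := by
  haveI : NeZero (2 * k) := ⟨by omega⟩
  by_cases h : p ≤ 2 * k
  · rw [qofpos_block1 p h]
    simp only [qpos]
    rw [ZMod.val_natCast_of_lt (by omega)]
    omega
  · rw [qofpos_block2 p (by omega)]
    simp only [qpos, neg_neg]
    rw [ZMod.val_natCast_of_lt (by omega)]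
    omega

lemma toList_base : FreeMonoid.toList (baseWord k) = Flist k hk 1 := by
  apply List.ext_getElem
  · simp [baseWord, Flist]
  · intro n h1 h2
    have hn : n < 4 * k := by simpa [baseWord] using h1
    simp only [baseWord, FreeMonoid.toList_ofList] at h1 ⊢
    rw [List.getElem_ofFn]
    rw [getElem_Flist (hk := hk)]
    apply Fin.ext
    simp only [qletter, qact, one_mul]
    rw [qpos_qofpos hk (1 + n) (by omega) (by omega)]
    omega

/-- The invariant predicate on words. -/
def QL (g : QuaternionGroup k) (i : ℕ) (w : List (Fin (4 * k))) : Prop :=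
  ∃ gs u', w = Blist k hk g i ++ (chain k hk gs ++ Eexp k hk g gs :: u')

lemma QL_step (g : QuaternionGroup k) (i : ℕ) (hi1 : 1 ≤ i) (hi2 : i < 4 * k)
    (δ₁ δ₂ : QuaternionGroup k) (l v : List (Fin (4 * k)))
    (h : QL hk g i (l ++ (Flist k hk δ₁ ++ v))) : QL hk g i (l ++ (Flist k hk δ₂ ++ v)) := by
  obtain ⟨gs, u', hw⟩ := h
  obtain ⟨c', gs', u'', heq, hc⟩ := gcover hk δ₁ δ₂ gs g i hi2 l u' v hw.symm
  rw [hc hi1] at heq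
  exact ⟨gs', u'', heq⟩

lemma con_invariant (g : QuaternionGroup k) (i : ℕ) (hi1 : 1 ≤ i) (hi2 : i < 4 * k)
    {w v : FreeMonoid (Fin (4 * k))} (h : qcon k hk w v) :
    ∀ l u : List (Fin (4 * k)),
      QL hk g i (l ++ (FreeMonoid.toList w ++ u)) ↔
      QL hk g i (l ++ (FreeMonoid.toList v ++ u)) := by
  have h' : ConGen.Rel (qrel k hk) w v := h
  clear h
  induction h' with
  | of x y hrel =>
      obtain ⟨hw, γ, hv⟩ := hrel
      intro l u
      subst hw hv
      rw [toList_base hk]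
      have hvv : FreeMonoid.toList (segWord k hk γ 1 (4 * k)) = Flist k hk γ := by
        simp [segWord, Flist]
      rw [hvv]
      exact ⟨QL_step hk g i hi1 hi2 1 γ l u, QL_step hk g i hi1 hi2 γ 1 l u⟩
  | refl x => intro l u; exact Iff.rfl
  | symm h ih => intro l u; exact (ih l u).symm
  | trans h1 h2 ih1 ih2 => intro l u; exact (ih1 l u).trans (ih2 l u)
  | mul h1 h2 ih1 ih2 =>
      intro l u
      rename_i a b c d
      rw [FreeMonoid.toList_mul, FreeMonoid.toList_mul]
      have e1 := ih1 l (FreeMonoid.toList c ++ u)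
      have e2 := ih2 (l ++ FreeMonoid.toList b) u
      simp only [List.append_assoc] at e1 e2 ⊢
      exact e1.trans e2

lemma A_split (g : QuaternionGroup k) (i : ℕ) (hi2 : i < 4 * k) :
    (List.range' (i + 1) (4 * k - i)).map (qletter k hk g) =
      Blist k hk g i ++ [qletter k hk g (4 * k)] := by
  have h4 : 4 * k - i = (4 * k - 1 - i) + 1 := by omega
  rw [h4, List.range'_concat, List.map_append,
    show (i + 1) + 1 * (4 * k - 1 - i) = 4 * k by omega]
  rfl

end Final

/-- if `π(w_1) = π(x_{τ(i+1)} ⋯ x_{τ(n)} w_2)` with `1 ≤ i < n`, then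
either `w_1 = x_{τ(i+1)} ⋯ x_{τ(n)} w_2'`, or
`w_1 = x_{τ(i+1)} ⋯ x_{τ(n-1)} x_{γ(1)} ⋯ x_{γ(n-1)} w_2''` for some `γ ∈ H`. -/
theorem stmt10 (k : ℕ) (hk : 2 ≤ k) (i : ℕ) (hi1 : 1 ≤ i) (hi2 : i < 4 * k)
    (g : QuaternionGroup k) (w1 w2 : FreeMonoid (Fin (4 * k)))
    (hπ : (qcon k hk).mk' w1 = (qcon k hk).mk' (segWord k hk g (i + 1) (4 * k - i) * w2)) :
    (∃ w2' : FreeMonoid (Fin (4 * k)), w1 = segWord k hk g (i + 1) (4 * k - i) * w2') ∨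
    (∃ (γ : QuaternionGroup k) (w2'' : FreeMonoid (Fin (4 * k))),
      w1 = segWord k hk g (i + 1) (4 * k - 1 - i) * segWord k hk γ 1 (4 * k - 1) * w2'') := by
  have hcon : qcon k hk w1 (segWord k hk g (i + 1) (4 * k - i) * w2) := by
    rw [← Con.eq]
    exact_mod_cast hπ
  have hQ2 : QL hk g i ([] ++ (FreeMonoid.toList
      (segWord k hk g (i + 1) (4 * k - i) * w2) ++ [])) := by
    refine ⟨[], FreeMonoid.toList w2, ?_⟩
    rw [FreeMonoid.toList_mul]
    simp only [segWord, FreeMonoid.toList_ofList, List.nil_append, List.append_nil, chain]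
    rw [A_split hk g i hi2]
    simp [Eexp, List.getLastD_nil]
  have hQ1 : QL hk g i (FreeMonoid.toList w1) := by
    have := (con_invariant hk g i hi1 hi2 hcon [] []).mpr hQ2
    simpa using this
  obtain ⟨gs, u', hw⟩ := hQ1
  cases gs with
  | nil =>
      left
      refine ⟨FreeMonoid.ofList u', ?_⟩
      apply FreeMonoid.toList.injective
      rw [FreeMonoid.toList_mul]
      simp only [segWord, FreeMonoid.toList_ofList]
      rw [A_split hk g i hi2, hw]
      simp [chain, Eexp, List.getLastD_nil]
  | cons γ gs' =>
      right
      refine ⟨γ, FreeMonoid.ofList (chain k hk gs' ++ Eexp k hk γ gs' :: u'), ?_⟩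
      apply FreeMonoid.toList.injective
      rw [FreeMonoid.toList_mul, FreeMonoid.toList_mul]
      simp only [segWord, FreeMonoid.toList_ofList]
      rw [hw, Eexp_cons]
      simp only [chain, Blist, Clist, List.append_assoc]
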